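/- There exists a constant C > 0, depending only on q, such that for all n ∈ ½ℤ₊ with n ≥ 1/2, all half-integers i ∈ {−n, …, n} and j ∈ {−n+1/2, …, n−1/2}, every entry of the 2×2 matrix b⁻_{nij} + q^{n+i}(1−q^{2n−2i})^{1/2} · diag((1−q^{2n+2j+1})^{1/2}, (1−q^{2n+2j−1})^{1/2}) has absolute value at most C·q^{2n}. -/

import Mathlib

noncomputable section

open Real

/-- The q-number `[m] = (q^m - q^(-m))/(q - q⁻¹)`. -/
def qnum (q m : ℝ) : ℝ := (q ^ m - q ^ (-m)) / (q - q⁻¹)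

/-- The 2×2 matrix `a⁺_{nij}`. -/
def aP (q n i j : ℝ) : Matrix (Fin 2) (Fin 2) ℝ :=
  (q ^ ((i + j - 1/2) / 2) * Real.sqrt (qnum q (n + i + 1))) •
    !![q ^ (-n - 1/2) * Real.sqrt (qnum q (n + j + 3/2)) / qnum q (2*n + 2), 0;
       q ^ ((1:ℝ)/2) * Real.sqrt (qnum q (n - j + 1/2)) / (qnum q (2*n + 1) * qnum q (2*n + 2)),
       q ^ (-n) * Real.sqrt (qnum q (n + j + 1/2)) / qnum q (2*n + 1)]

/-- The 2×2 matrix `a⁻_{nij}`. -/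
def aM (q n i j : ℝ) : Matrix (Fin 2) (Fin 2) ℝ :=
  (q ^ ((i + j - 1/2) / 2) * Real.sqrt (qnum q (n - i))) •
    !![q ^ (n + 1) * Real.sqrt (qnum q (n - j + 1/2)) / qnum q (2*n + 1),
       -(q ^ ((1:ℝ)/2) * Real.sqrt (qnum q (n + j + 1/2)) / (qnum q (2*n) * qnum q (2*n + 1)));
       0, q ^ (n + 1/2) * Real.sqrt (qnum q (n - j - 1/2)) / qnum q (2*n)]

/-- The 2×2 matrix `b⁺_{nij}`. -/
def bP (q n i j : ℝ) : Matrix (Fin 2) (Fin 2) ℝ :=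
  (q ^ ((i + j - 1/2) / 2) * Real.sqrt (qnum q (n + i + 1))) •
    !![Real.sqrt (qnum q (n - j + 3/2)) / qnum q (2*n + 2), 0;
       -(q ^ (-n - 1) * Real.sqrt (qnum q (n + j + 1/2)) / (qnum q (2*n + 1) * qnum q (2*n + 2))),
       q ^ (-(1:ℝ)/2) * Real.sqrt (qnum q (n - j + 1/2)) / qnum q (2*n + 1)]

/-- The 2×2 matrix `b⁻_{nij}`. -/
def bM (q n i j : ℝ) : Matrix (Fin 2) (Fin 2) ℝ :=
  (q ^ ((i + j - 1/2) / 2) * Real.sqrt (qnum q (n - i))) •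
    !![-(q ^ (-(1:ℝ)/2) * Real.sqrt (qnum q (n + j + 1/2)) / qnum q (2*n + 1)),
       -(q ^ n * Real.sqrt (qnum q (n - j + 1/2)) / (qnum q (2*n) * qnum q (2*n + 1)));
       0, -(Real.sqrt (qnum q (n + j - 1/2)) / qnum q (2*n))]

/-- `n` is a nonnegative half-integer: `n ∈ ½ℤ₊ = {0, 1/2, 1, 3/2, …}`. -/
def HalfNat (n : ℝ) : Prop := ∃ N : ℕ, (N : ℝ) = 2 * n

/-- `i ∈ {-n, -n+1, …, n}`. -/
def IdxRange (n i : ℝ) : Prop := (∃ k : ℕ, (k : ℝ) = i + n) ∧ i ≤ n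

/-- `j ∈ {-n+1/2, -n+3/2, …, n-1/2}`. -/
def JRangeIn (n j : ℝ) : Prop := (∃ k : ℕ, (k : ℝ) = j + n - 1/2) ∧ j ≤ n - 1/2

/-- `j ∈ {-n-1/2, -n+1/2, …, n+1/2}`. -/
def JRangeOut (n j : ℝ) : Prop := (∃ k : ℕ, (k : ℝ) = j + n + 1/2) ∧ j ≤ n + 1/2

/-! ### Auxiliary lemmas -/

/-- Closed form for the q-number in terms of `1 - q^(2m)`. -/
lemma qnum_eq' {q : ℝ} (hq0 : 0 < q) (hq1 : q < 1) (m : ℝ) :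
    qnum q m = q ^ (1 - m) * (1 - q ^ (2*m)) / (1 - q ^ (2:ℝ)) := by
  have hqne : q ≠ 0 := hq0.ne'
  have ht : (0:ℝ) < q ^ m := rpow_pos_of_pos hq0 m
  have h2 : q ^ (2:ℝ) = q * q := by
    rw [show (2:ℝ) = (1:ℝ)+1 by norm_num, rpow_add hq0, rpow_one]
  have hm2 : q ^ (2*m) = q ^ m * q ^ m := by
    rw [two_mul, rpow_add hq0]
  have hmn : q ^ (-m) = (q ^ m)⁻¹ := by rw [rpow_neg hq0.le]
  have h1m : q ^ (1-m) = q / q ^ m := by rw [rpow_sub hq0, rpow_one]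
  have hqq : q - q⁻¹ = (q*q - 1)/q := by field_simp
  have hd2 : 1 - q*q ≠ 0 := by nlinarith
  have hd2' : q*q - 1 ≠ 0 := by nlinarith
  rw [qnum, hm2, hmn, h1m, h2, hqq]
  field_simp
  rw [div_eq_div_iff (by nlinarith) (by nlinarith)]
  ring

lemma sqrt_rpow' {q : ℝ} (hq0 : 0 < q) (e : ℝ) : Real.sqrt (q ^ e) = q ^ (e/2) := by
  rw [sqrt_eq_rpow, ← rpow_mul hq0.le]
  congr 1; ring

/-- Closed form for the square root of the q-number. -/
lemma sqrt_qnum' {q : ℝ} (hq0 : 0 < q) (hq1 : q < 1) {m : ℝ} (hm : 0 ≤ m) :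
    Real.sqrt (qnum q m) =
      q ^ ((1-m)/2) * Real.sqrt (1 - q ^ (2*m)) / Real.sqrt (1 - q ^ (2:ℝ)) := by
  have h1 : (0:ℝ) ≤ 1 - q ^ (2*m) := by
    have := rpow_le_one hq0.le hq1.le (by linarith : (0:ℝ) ≤ 2*m)
    linarith
  rw [qnum_eq' hq0 hq1, Real.sqrt_div (by positivity), Real.sqrt_mul (by positivity),
    sqrt_rpow' hq0]

lemma alg1' {p1 p2 p3 p4 P Q sA sB s2 D E : ℝ} (hs2 : s2 ≠ 0) (hD : D ≠ 0) (hQ : Q ≠ 0)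
    (hE : E = s2 * s2) (hP : P = p1 * p2 * p3 * p4 * Q) :
    p1 * (p2 * sA / s2) * (-(p3 * (p4 * sB / s2) / (Q⁻¹ * D / E)))
      = -(P * sA * sB / D) := by
  subst hE hP; field_simp

lemma alg2' {p1 p2 p4 P Q sA sB s2 D E : ℝ} (hs2 : s2 ≠ 0) (hD : D ≠ 0) (hQ : Q ≠ 0)
    (hE : E = s2 * s2) (hP : P * Q = p1 * p2 * p4) :
    p1 * (p2 * sA / s2) * (-(p4 * sB / s2 / (Q * D / E)))
      = -(P * sA * sB / D) := by
  subst hE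
  have hP' : P = p1 * p2 * p4 * Q⁻¹ := by
    field_simp
    linarith [hP]
  subst hP'
  field_simp

lemma alg3' {p1 p2 p3 p4 P Q1 Q2 sA sB s2 D1 D2 E : ℝ} (hs2 : s2 ≠ 0) (hD1 : D1 ≠ 0)
    (hD2 : D2 ≠ 0) (hQ1 : Q1 ≠ 0) (hQ2 : Q2 ≠ 0) (hE : E = s2 * s2)
    (hP : P * Q1 = p1 * p2 * p3 * p4 * Q2) :
    p1 * (p2 * sA / s2) * (-(p3 * (p4 * sB / s2) / (Q1 * D1 / E * (Q2⁻¹ * D2 / E))))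
      = -(P * E * sA * sB / (D1 * D2)) := by
  subst hE
  have hP' : P = p1 * p2 * p3 * p4 * Q2 * Q1⁻¹ := by
    field_simp
    linarith [hP]
  subst hP'
  field_simp

/-- Closed form of the `(0,0)` entry of `b⁻`. -/
lemma bM00 {q n i j : ℝ} (hq0 : 0 < q) (hq1 : q < 1) (hn : 0 ≤ n)
    (hA : 0 ≤ n - i) (hB : 0 ≤ n + j + 1/2) :
    -(q ^ ((i + j - 1/2) / 2) * Real.sqrt (qnum q (n - i)) *
      (q ^ (-(1:ℝ)/2) * Real.sqrt (qnum q (n + j + 1/2)) / qnum q (2*n + 1)))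
    = -(q ^ (n + i) * Real.sqrt (1 - q ^ (2*n - 2*i)) * Real.sqrt (1 - q ^ (2*n + 2*j + 1))
        / (1 - q ^ (4*n + 2))) := by
  have h2pos : (0:ℝ) < 1 - q ^ (2:ℝ) := by
    have := rpow_lt_one hq0.le hq1 (by norm_num : (0:ℝ) < 2); linarith
  have h4pos : (0:ℝ) < 1 - q ^ (4*n + 2) := by
    have := rpow_lt_one hq0.le hq1 (by linarith : (0:ℝ) < 4*n + 2); linarith
  have hs2 : Real.sqrt (1 - q ^ (2:ℝ)) ≠ 0 := by positivity
  have hq2n : q ^ (2*n) ≠ 0 := (rpow_pos_of_pos hq0 _).ne'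
  rw [← mul_neg]
  rw [sqrt_qnum' hq0 hq1 hA, sqrt_qnum' hq0 hq1 hB, qnum_eq' hq0 hq1 (2*n+1)]
  rw [show 2*(n-i) = 2*n-2*i by ring, show 2*(n+j+1/2) = 2*n+2*j+1 by ring,
      show 2*(2*n+1) = 4*n+2 by ring, show 1-(2*n+1) = -(2*n) by ring]
  rw [rpow_neg hq0.le (2*n)]
  refine alg1' hs2 h4pos.ne' hq2n (Real.mul_self_sqrt h2pos.le).symm ?_
  rw [← rpow_add hq0, ← rpow_add hq0, ← rpow_add hq0, ← rpow_add hq0]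
  congr 1; ring

/-- Closed form of the `(1,1)` entry of `b⁻`. -/
lemma bM11 {q n i j : ℝ} (hq0 : 0 < q) (hq1 : q < 1) (hn : 1/2 ≤ n)
    (hA : 0 ≤ n - i) (hB : 0 ≤ n + j - 1/2) :
    -(q ^ ((i + j - 1/2) / 2) * Real.sqrt (qnum q (n - i)) *
      (Real.sqrt (qnum q (n + j - 1/2)) / qnum q (2*n)))
    = -(q ^ (n + i) * Real.sqrt (1 - q ^ (2*n - 2*i)) * Real.sqrt (1 - q ^ (2*n + 2*j - 1))
        / (1 - q ^ (4*n))) := by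
  have h2pos : (0:ℝ) < 1 - q ^ (2:ℝ) := by
    have := rpow_lt_one hq0.le hq1 (by norm_num : (0:ℝ) < 2); linarith
  have h4pos : (0:ℝ) < 1 - q ^ (4*n) := by
    have := rpow_lt_one hq0.le hq1 (by linarith : (0:ℝ) < 4*n); linarith
  have hs2 : Real.sqrt (1 - q ^ (2:ℝ)) ≠ 0 := by positivity
  have hQ : q ^ (1-2*n) ≠ 0 := (rpow_pos_of_pos hq0 _).ne'
  rw [← mul_neg]
  rw [sqrt_qnum' hq0 hq1 hA, sqrt_qnum' hq0 hq1 hB, qnum_eq' hq0 hq1 (2*n)]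
  rw [show 2*(n-i) = 2*n-2*i by ring, show 2*(n+j-1/2) = 2*n+2*j-1 by ring,
      show 2*(2*n) = 4*n by ring]
  refine alg2' hs2 h4pos.ne' hQ (Real.mul_self_sqrt h2pos.le).symm ?_
  rw [← rpow_add hq0, ← rpow_add hq0, ← rpow_add hq0]
  congr 1; ring

/-- Closed form of the `(0,1)` entry of `b⁻`. -/
lemma bM01 {q n i j : ℝ} (hq0 : 0 < q) (hq1 : q < 1) (hn : 1/2 ≤ n)
    (hA : 0 ≤ n - i) (hB : 0 ≤ n - j + 1/2) :
    -(q ^ ((i + j - 1/2) / 2) * Real.sqrt (qnum q (n - i)) *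
      (q ^ n * Real.sqrt (qnum q (n - j + 1/2)) / (qnum q (2*n) * qnum q (2*n + 1))))
    = -(q ^ (4*n + i + j - 1/2) * (1 - q ^ (2:ℝ)) * Real.sqrt (1 - q ^ (2*n - 2*i)) *
          Real.sqrt (1 - q ^ (2*n - 2*j + 1)) / ((1 - q ^ (4*n)) * (1 - q ^ (4*n + 2)))) := by
  have h2pos : (0:ℝ) < 1 - q ^ (2:ℝ) := by
    have := rpow_lt_one hq0.le hq1 (by norm_num : (0:ℝ) < 2); linarith
  have h4pos : (0:ℝ) < 1 - q ^ (4*n) := by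
    have := rpow_lt_one hq0.le hq1 (by linarith : (0:ℝ) < 4*n); linarith
  have h4pos' : (0:ℝ) < 1 - q ^ (4*n+2) := by
    have := rpow_lt_one hq0.le hq1 (by linarith : (0:ℝ) < 4*n+2); linarith
  have hs2 : Real.sqrt (1 - q ^ (2:ℝ)) ≠ 0 := by positivity
  have hQ1 : q ^ (1-2*n) ≠ 0 := (rpow_pos_of_pos hq0 _).ne'
  have hQ2 : q ^ (2*n) ≠ 0 := (rpow_pos_of_pos hq0 _).ne'
  rw [← mul_neg]
  rw [sqrt_qnum' hq0 hq1 hA, sqrt_qnum' hq0 hq1 hB, qnum_eq' hq0 hq1 (2*n),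
      qnum_eq' hq0 hq1 (2*n+1)]
  rw [show 2*(n-i) = 2*n-2*i by ring, show 2*(n-j+1/2) = 2*n-2*j+1 by ring,
      show 2*(2*n) = 4*n by ring, show 2*(2*n+1) = 4*n+2 by ring,
      show 1-(2*n+1) = -(2*n) by ring]
  rw [rpow_neg hq0.le (2*n)]
  refine alg3' hs2 h4pos.ne' h4pos'.ne' hQ1 hQ2 (Real.mul_self_sqrt h2pos.le).symm ?_
  rw [← rpow_add hq0, ← rpow_add hq0, ← rpow_add hq0, ← rpow_add hq0, ← rpow_add hq0]
  congr 1; ring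

lemma fb1 {q n P sA sB t : ℝ} (hq0 : 0 < q) (hq1 : q < 1)
    (hP0 : 0 ≤ P) (hP1 : P ≤ 1) (hA0 : 0 ≤ sA) (hA1 : sA ≤ 1)
    (hB0 : 0 ≤ sB) (hB1 : sB ≤ 1)
    (ht0 : 0 ≤ t) (ht1 : t ≤ q ^ (2*n)) (ht2 : t ≤ q ^ (2:ℝ)) :
    |(-(P * sA * sB / (1 - t))) + P * sA * sB| ≤ (1 - q ^ (2:ℝ))⁻¹ * q ^ (2*n) := by
  have hq2 : q ^ (2:ℝ) < 1 := rpow_lt_one hq0.le hq1 (by norm_num)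
  have hd : 0 < 1 - t := by linarith
  have hd2 : 0 < 1 - q ^ (2:ℝ) := by linarith
  have h : -(P * sA * sB / (1 - t)) + P * sA * sB = -(P * sA * sB * t / (1 - t)) := by
    field_simp; ring
  have hnum : 0 ≤ P * sA * sB * t :=
    mul_nonneg (mul_nonneg (mul_nonneg hP0 hA0) hB0) ht0
  rw [h, abs_neg, abs_of_nonneg (div_nonneg hnum hd.le)]
  calc P * sA * sB * t / (1 - t) ≤ q ^ (2*n) / (1 - q ^ (2:ℝ)) := by
        apply div_le_div₀ (rpow_nonneg hq0.le _) ?_ hd2 (by linarith)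
        calc P * sA * sB * t ≤ 1 * 1 * 1 * t := by
              apply mul_le_mul _ le_rfl ht0 (by norm_num)
              apply mul_le_mul _ hB1 hB0 (by norm_num)
              apply mul_le_mul hP1 hA1 hA0 (by norm_num)
          _ = t := by ring
          _ ≤ q ^ (2*n) := ht1
    _ = (1 - q ^ (2:ℝ))⁻¹ * q ^ (2*n) := by ring

lemma fb2 {X u Y d1 d2 sA sB : ℝ} (hu : 0 < u) (hX0 : 0 ≤ X) (hXY : X ≤ Y)
    (hA0 : 0 ≤ sA) (hA1 : sA ≤ 1) (hB0 : 0 ≤ sB) (hB1 : sB ≤ 1)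
    (hd1 : u ≤ d1) (hd2 : u ≤ d2) :
    |(-(X * u * sA * sB / (d1 * d2)))| ≤ u⁻¹ * Y := by
  have hd1p : 0 < d1 := lt_of_lt_of_le hu hd1
  have hd2p : 0 < d2 := lt_of_lt_of_le hu hd2
  have hY : 0 ≤ Y := le_trans hX0 hXY
  have hnum : 0 ≤ X * u * sA * sB :=
    mul_nonneg (mul_nonneg (mul_nonneg hX0 hu.le) hA0) hB0
  rw [abs_neg, abs_of_nonneg (div_nonneg hnum (by positivity))]
  calc X * u * sA * sB / (d1 * d2) ≤ (Y * u) / (u * u) := by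
        apply div_le_div₀ (mul_nonneg hY hu.le) ?_ (by positivity)
          (mul_le_mul hd1 hd2 hu.le hd1p.le)
        calc X * u * sA * sB ≤ X * u * 1 * 1 := by
              apply mul_le_mul _ hB1 hB0 (by positivity)
              apply mul_le_mul le_rfl hA1 hA0 (by positivity)
          _ = X * u := by ring
          _ ≤ Y * u := mul_le_mul_of_nonneg_right hXY hu.le
    _ = u⁻¹ * Y := by
        rw [mul_div_mul_right _ _ hu.ne', div_eq_inv_mul]

/-- There is `C > 0` depending only on `q` such that for all `n ∈ ½ℤ₊` with
`n ≥ 1/2`, `i ∈ {-n,…,n}`, `j ∈ {-n+1/2,…,n-1/2}`, every entry of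
`b⁻_{nij} + q^(n+i) (1-q^(2n-2i))^(1/2) diag((1-q^(2n+2j+1))^(1/2), (1-q^(2n+2j-1))^(1/2))`
has absolute value at most `C·q^(2n)`. -/
theorem bMinus_asymptotics (q : ℝ) (hq0 : 0 < q) (hq1 : q < 1) :
    ∃ C : ℝ, 0 < C ∧ ∀ n i j : ℝ, HalfNat n → 1/2 ≤ n → IdxRange n i → JRangeIn n j →
      ∀ r s : Fin 2,
        |(bM q n i j + (q ^ (n + i) * Real.sqrt (1 - q ^ (2*n - 2*i))) •
            !![Real.sqrt (1 - q ^ (2*n + 2*j + 1)), 0;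
               0, Real.sqrt (1 - q ^ (2*n + 2*j - 1))]) r s|
          ≤ C * q ^ (2 * n) := by
  have hq2 : q ^ (2:ℝ) < 1 := rpow_lt_one hq0.le hq1 (by norm_num)
  have hd2 : 0 < 1 - q ^ (2:ℝ) := by linarith
  refine ⟨(1 - q ^ (2:ℝ))⁻¹, by positivity, ?_⟩
  intro n i j _ h12 hi hj r s
  obtain ⟨⟨k, hk⟩, hin⟩ := hi
  obtain ⟨⟨l, hl⟩, hjn⟩ := hj
  have hni : (0:ℝ) ≤ i + n := hk ▸ k.cast_nonneg
  have hjn0 : (0:ℝ) ≤ j + n - 1/2 := hl ▸ l.cast_nonneg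
  have hn0 : (0:ℝ) ≤ n := by linarith
  have hA : 0 ≤ n - i := by linarith
  have hBp : 0 ≤ n + j + 1/2 := by linarith
  have hBm : 0 ≤ n + j - 1/2 := by linarith
  have hD : 0 ≤ n - j + 1/2 := by linarith
  have hXle : ∀ e : ℝ, Real.sqrt (1 - q ^ e) ≤ 1 := fun e =>
    Real.sqrt_le_one.mpr (by linarith [rpow_nonneg hq0.le e])
  have hXge : ∀ e : ℝ, 0 ≤ Real.sqrt (1 - q ^ e) := fun e => Real.sqrt_nonneg _
  have hPp : 0 ≤ q ^ (n + i) := (rpow_pos_of_pos hq0 _).le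
  have hP1 : q ^ (n + i) ≤ 1 := rpow_le_one hq0.le hq1.le (by linarith)
  fin_cases r <;> fin_cases s <;>
    simp only [bM, Matrix.add_apply, Matrix.smul_apply, smul_eq_mul, Matrix.of_apply,
      Matrix.cons_val', Matrix.cons_val_zero, Matrix.cons_val_one, Matrix.head_cons,
      Matrix.empty_val', Matrix.cons_val_fin_one, Matrix.head_fin_const, Fin.mk_zero,
      Fin.mk_one, Fin.isValue, mul_zero, add_zero, zero_add, mul_neg]
  · rw [bM00 hq0 hq1 hn0 hA hBp]
    exact fb1 hq0 hq1 hPp hP1 (hXge _) (hXle _) (hXge _) (hXle _)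
      (rpow_nonneg hq0.le _)
      (rpow_le_rpow_of_exponent_ge hq0 hq1.le (by linarith))
      (rpow_le_rpow_of_exponent_ge hq0 hq1.le (by linarith))
  · rw [bM01 hq0 hq1 h12 hA hD]
    exact fb2 hd2 (rpow_nonneg hq0.le _)
      (rpow_le_rpow_of_exponent_ge hq0 hq1.le (by linarith))
      (hXge _) (hXle _) (hXge _) (hXle _)
      (by have := rpow_le_rpow_of_exponent_ge hq0 hq1.le
            (by linarith : (2:ℝ) ≤ 4*n); linarith)
      (by have := rpow_le_rpow_of_exponent_ge hq0 hq1.le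
            (by linarith : (2:ℝ) ≤ 4*n+2); linarith)
  · rw [abs_zero]
    exact mul_nonneg (inv_nonneg.2 hd2.le) (rpow_nonneg hq0.le _)
  · rw [bM11 hq0 hq1 h12 hA hBm]
    exact fb1 hq0 hq1 hPp hP1 (hXge _) (hXle _) (hXge _) (hXle _)
      (rpow_nonneg hq0.le _)
      (rpow_le_rpow_of_exponent_ge hq0 hq1.le (by linarith))
      (rpow_le_rpow_of_exponent_ge hq0 hq1.le (by linarith))
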